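/- arXiv:2410.13578 — 2 statements merged into one kernel-verified Lean document; each statement's English description precedes it below -/
import Mathlib

section
/- Let q be a prime power and let C be a symplectic LCD [2n,2k]_q code. Let G be a generator matrix of C and H be a generator matrix of C^{⊥s}, and let M be the 2n×2n matrix obtained by stacking G on top of H (M is invertible since C ⊕ C^{⊥s} = F_q^{2n}). Then a matrix Q belongs to the stabilizer St_s(C) = {Q ∈ Sp¹_{2n}(q) : CQ = C} if and only if Q = M⁻¹ · diag(Q₁, Q₂) · M for some invertible 2k×2k matrix Q₁ and invertible (2n−2k)×(2n−2k) matrix Q₂ over F_q satisfying Q₁(G Ω_n Gᵀ)Q₁ᵀ = G Ω_n Gᵀ and Q₂(H Ω_n Hᵀ)Q₂ᵀ = H Ω_n Hᵀ. -/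
open scoped BigOperators
open Matrix

noncomputable section

/-- The symplectic inner product `⟨x,y⟩_s = ∑_{i=1}^n (x_i y_{n+i} - x_{n+i} y_i)` on `K^{2n}`. -/
def sympInner {K : Type*} [Field K] (n : ℕ) (x y : Fin (2 * n) → K) : K :=
  ∑ i : Fin n,
    (x ⟨i.1, by have := i.2; omega⟩ * y ⟨n + i.1, by have := i.2; omega⟩ -
      x ⟨n + i.1, by have := i.2; omega⟩ * y ⟨i.1, by have := i.2; omega⟩)

/-- The symplectic dual `C^{⊥s}` of a code `C ⊆ K^{2n}`. -/
def sympDual {K : Type*} [Field K] (n : ℕ) (C : Submodule K (Fin (2 * n) → K)) :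
    Submodule K (Fin (2 * n) → K) where
  carrier := {y | ∀ x ∈ C, sympInner n x y = 0}
  zero_mem' := by
    intro x hx
    simp [sympInner]
  add_mem' := by
    intro y z hy hz x hx
    have h1 := hy x hx
    have h2 := hz x hx
    simp only [sympInner, Pi.add_apply] at h1 h2 ⊢
    calc (∑ i : Fin n, _) = (∑ i : Fin n,
          (x ⟨i.1, by have := i.2; omega⟩ * y ⟨n + i.1, by have := i.2; omega⟩ -
            x ⟨n + i.1, by have := i.2; omega⟩ * y ⟨i.1, by have := i.2; omega⟩)) +
        ∑ i : Fin n,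
          (x ⟨i.1, by have := i.2; omega⟩ * z ⟨n + i.1, by have := i.2; omega⟩ -
            x ⟨n + i.1, by have := i.2; omega⟩ * z ⟨i.1, by have := i.2; omega⟩) := by
          rw [← Finset.sum_add_distrib]
          exact Finset.sum_congr rfl fun i _ => by ring
      _ = 0 := by rw [h1, h2, add_zero]
  smul_mem' := by
    intro c y hy x hx
    have h := hy x hx
    simp only [sympInner, Pi.smul_apply, smul_eq_mul] at h ⊢
    calc (∑ i : Fin n, _) = c * ∑ i : Fin n,
          (x ⟨i.1, by have := i.2; omega⟩ * y ⟨n + i.1, by have := i.2; omega⟩ -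
            x ⟨n + i.1, by have := i.2; omega⟩ * y ⟨i.1, by have := i.2; omega⟩) := by
          rw [Finset.mul_sum]
          exact Finset.sum_congr rfl fun i _ => by ring
      _ = 0 := by rw [h, mul_zero]

/-- The matrix `Ω_n = [[O, I_n], [-I_n, O]]` defining the symplectic inner product. -/
def sympOmega (n : ℕ) (K : Type*) [Field K] : Matrix (Fin (2 * n)) (Fin (2 * n)) K :=
  Matrix.of fun i j => if j.1 = i.1 + n then 1 else if i.1 = j.1 + n then -1 else 0

/-- The block diagonal matrix `diag(J₂, …, J₂)` (with `J₂ = [[0,1],[-1,0]]`) of size `N`. -/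
def jayBlocks (N : ℕ) (K : Type*) [Field K] : Matrix (Fin N) (Fin N) K :=
  Matrix.of fun i j =>
    if i.1 % 2 = 0 ∧ j.1 = i.1 + 1 then 1
    else if j.1 % 2 = 0 ∧ i.1 = j.1 + 1 then -1 else 0

section Aux
variable {K : Type*} [Field K] {n : ℕ}

lemma myVecMul_eq_sum {m p : Type*} [Fintype m] (u : m → K) (A : Matrix m p K) :
    u ᵥ* A = ∑ i, u i • A i := by
  ext j
  simp [Matrix.vecMul, dotProduct, Finset.sum_apply]

lemma myRow_mul {l m o : Type*} [Fintype m] (A : Matrix l m K) (B : Matrix m o K) (i : l) :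
    (A * B) i = (A i) ᵥ* B := by
  ext j
  simp [Matrix.mul_apply, Matrix.vecMul, dotProduct]

lemma sympOmega_mulVec (y : Fin (2 * n) → K) (a : Fin (2 * n)) :
    (sympOmega n K *ᵥ y) a =
      if h : a.1 < n then y ⟨a.1 + n, by omega⟩ else -y ⟨a.1 - n, by have := a.2; omega⟩ := by
  classical
  have ha := a.2
  show (∑ b, sympOmega n K a b * y b) = _
  split_ifs with h
  · rw [Finset.sum_eq_single (⟨a.1 + n, by omega⟩ : Fin (2 * n))]
    · simp [sympOmega]
    · intro b _ hb
      have hb1 : ¬ b.1 = a.1 + n := fun hc => hb (Fin.ext hc)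
      have hb2 : ¬ a.1 = b.1 + n := by omega
      simp [sympOmega, hb1, hb2]
    · intro hmem; exact absurd (Finset.mem_univ _) hmem
  · rw [Finset.sum_eq_single (⟨a.1 - n, by omega⟩ : Fin (2 * n))]
    · have h1 : ¬ (a.1 - n = a.1 + n) := by omega
      have h2 : a.1 = (a.1 - n) + n := by omega
      simp [sympOmega, h1, ← h2]
    · intro b _ hb
      have hb' := b.2
      have hb1 : ¬ b.1 = a.1 + n := by omega
      have hb2 : ¬ a.1 = b.1 + n := by
        intro hc
        exact hb (Fin.ext (show b.1 = a.1 - n by omega))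
      simp [sympOmega, hb1, hb2]
    · intro hmem; exact absurd (Finset.mem_univ _) hmem

lemma sympInner_eq (x y : Fin (2 * n) → K) :
    sympInner n x y = x ⬝ᵥ (sympOmega n K *ᵥ y) := by
  classical
  rw [dotProduct,
    ← Equiv.sum_comp ((finSumFinEquiv.trans (finCongr (two_mul n).symm)) : Fin n ⊕ Fin n ≃ Fin (2 * n))]
  rw [Fintype.sum_sum_type]
  unfold sympInner
  rw [Finset.sum_sub_distrib, sub_eq_add_neg]
  congr 1
  · apply Finset.sum_congr rfl
    intro i _
    set a : Fin (2 * n) := (finSumFinEquiv.trans (finCongr (two_mul n).symm)) (Sum.inl i) with hadef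
    have hval : a.1 = i.1 := by simp [hadef]
    have hi := i.2
    rw [sympOmega_mulVec, dif_pos (show a.1 < n by omega)]
    exact congrArg₂ (fun u v : K => u * v)
      (congrArg x (Fin.ext (show i.1 = a.1 by omega)))
      (congrArg y (Fin.ext (show n + i.1 = a.1 + n by omega)))
  · rw [← Finset.sum_neg_distrib]
    apply Finset.sum_congr rfl
    intro i _
    set a : Fin (2 * n) := (finSumFinEquiv.trans (finCongr (two_mul n).symm)) (Sum.inr i) with hadef
    have hval : a.1 = n + i.1 := by simp [hadef]; omega
    have hi := i.2
    rw [sympOmega_mulVec, dif_neg (show ¬ a.1 < n by omega), mul_neg, neg_inj]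
    exact congrArg₂ (fun u v : K => u * v)
      (congrArg x (Fin.ext (show n + i.1 = a.1 by omega)))
      (congrArg y (Fin.ext (show i.1 = a.1 - n by omega)))

lemma gram_entry {m o : Type*} [Fintype m] [Fintype o]
    (A : Matrix m (Fin (2 * n)) K) (B : Matrix o (Fin (2 * n)) K) (i : m) (j : o) :
    (A * sympOmega n K * Bᵀ) i j = sympInner n (A i) (B j) := by
  rw [sympInner_eq]
  simp only [Matrix.mul_apply, dotProduct, Matrix.mulVec, Matrix.transpose_apply,
    Finset.sum_mul, Finset.mul_sum]
  rw [Finset.sum_comm]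
  exact Finset.sum_congr rfl fun a _ => Finset.sum_congr rfl fun b _ => by ring

lemma sympInner_vecMul (A B : Matrix (Fin (2 * n)) (Fin (2 * n)) K) (u v : Fin (2 * n) → K) :
    sympInner n (u ᵥ* A) (v ᵥ* B) = u ⬝ᵥ ((A * sympOmega n K * Bᵀ) *ᵥ v) := by
  rw [sympInner_eq, show (v ᵥ* B) = Bᵀ *ᵥ v from (Matrix.mulVec_transpose B v).symm,
    Matrix.mulVec_mulVec,
    Matrix.dotProduct_mulVec, Matrix.vecMul_vecMul, ← Matrix.dotProduct_mulVec,
    ← Matrix.mul_assoc]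

lemma sympInner_anti (x y : Fin (2 * n) → K) : sympInner n y x = -sympInner n x y := by
  unfold sympInner
  rw [← Finset.sum_neg_distrib]
  exact Finset.sum_congr rfl fun i _ => by ring

lemma mem_span_rows_iff {m : Type*} [Fintype m] {p : Type*}
    (A : Matrix m p K) (x : p → K) :
    x ∈ Submodule.span K (Set.range fun i : m => A i) ↔ ∃ u : m → K, u ᵥ* A = x := by
  rw [Submodule.mem_span_range_iff_exists_fun]
  constructor
  · rintro ⟨c, hc⟩; exact ⟨c, by rw [myVecMul_eq_sum]; exact hc⟩
  · rintro ⟨c, hc⟩; exact ⟨c, by rw [← myVecMul_eq_sum]; exact hc⟩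

lemma span_rows_mul_le {m m' p : Type*} [Fintype m] [Fintype m']
    (P : Matrix m' m K) (A : Matrix m p K) :
    Submodule.span K (Set.range fun i : m' => (P * A) i) ≤
      Submodule.span K (Set.range fun i : m => A i) := by
  rw [Submodule.span_le]
  rintro x ⟨i, rfl⟩
  exact (mem_span_rows_iff A _).mpr ⟨P i, (myRow_mul P A i).symm⟩

lemma span_rows_unit_mul {m p : Type*} [Fintype m] [DecidableEq m]
    (P : Matrix m m K) (hP : IsUnit P) (A : Matrix m p K) :
    Submodule.span K (Set.range fun i : m => (P * A) i) =
      Submodule.span K (Set.range fun i : m => A i) := by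
  refine le_antisymm (span_rows_mul_le P A) ?_
  have h : A = P⁻¹ * (P * A) := by
    rw [← Matrix.mul_assoc, Matrix.nonsing_inv_mul P ((Matrix.isUnit_iff_isUnit_det P).mp hP),
      Matrix.one_mul]
  conv_lhs => rw [h]
  exact span_rows_mul_le P⁻¹ (P * A)

lemma mem_sympDual {C : Submodule K (Fin (2 * n) → K)} {y : Fin (2 * n) → K} :
    y ∈ sympDual n C ↔ ∀ x ∈ C, sympInner n x y = 0 := Iff.rfl

lemma conj_omega_eq {m : Type*} [Fintype m] (A : Matrix m (Fin (2 * n)) K)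
    (Q : Matrix (Fin (2 * n)) (Fin (2 * n)) K)
    (hQ : Q * sympOmega n K * Qᵀ = sympOmega n K) :
    (A * Q) * sympOmega n K * (A * Q)ᵀ = A * sympOmega n K * Aᵀ := by
  rw [Matrix.transpose_mul]
  calc A * Q * sympOmega n K * (Qᵀ * Aᵀ) = A * (Q * sympOmega n K * Qᵀ) * Aᵀ := by
        simp only [Matrix.mul_assoc]
    _ = A * sympOmega n K * Aᵀ := by rw [hQ]

end Aux

/-- Description of the stabilizer of a symplectic LCD `[2n,2k]_q` code in
the symplectic group: `Q` stabilizes `C` iff `Q = M⁻¹ · diag(Q₁,Q₂) · M`, where `M` is the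
matrix obtained by stacking a generator matrix `G` of `C` on top of a generator matrix `H`
of `C^{⊥s}`, and `Q₁, Q₂` are invertible matrices preserving the Gram matrices `G Ω_n Gᵀ`
and `H Ω_n Hᵀ`. -/
theorem symplecticLCD_stabilizer
    (q : ℕ) (hq : IsPrimePow q)
    {K : Type*} [Field K] [Fintype K] (hK : Fintype.card K = q)
    (n k : ℕ) (hkn : 2 * k ≤ 2 * n)
    (C : Submodule K (Fin (2 * n) → K)) (hC : Module.finrank K C = 2 * k)
    (hLCD : C ⊓ sympDual n C = ⊥)
    (G : Matrix (Fin (2 * k)) (Fin (2 * n)) K)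
    (hGli : LinearIndependent K fun i : Fin (2 * k) => G i)
    (hGsp : Submodule.span K (Set.range fun i : Fin (2 * k) => G i) = C)
    (H : Matrix (Fin (2 * n - 2 * k)) (Fin (2 * n)) K)
    (hHli : LinearIndependent K fun i : Fin (2 * n - 2 * k) => H i)
    (hHsp : Submodule.span K (Set.range fun i : Fin (2 * n - 2 * k) => H i) = sympDual n C)
    (M : Matrix (Fin (2 * n)) (Fin (2 * n)) K)
    (hM : M = Matrix.of fun i j => Matrix.fromRows G H
      ((finSumFinEquiv.trans
        (finCongr (by omega : 2 * k + (2 * n - 2 * k) = 2 * n))).symm i) j)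
    (hMunit : IsUnit M)
    (Q : Matrix (Fin (2 * n)) (Fin (2 * n)) K) :
    (IsUnit Q ∧ Q * sympOmega n K * Qᵀ = sympOmega n K ∧
        C.map (Matrix.vecMulLinear Q) = C) ↔
    ∃ (Q₁ : Matrix (Fin (2 * k)) (Fin (2 * k)) K)
      (Q₂ : Matrix (Fin (2 * n - 2 * k)) (Fin (2 * n - 2 * k)) K),
      IsUnit Q₁ ∧ IsUnit Q₂ ∧
      Q₁ * (G * sympOmega n K * Gᵀ) * Q₁ᵀ = G * sympOmega n K * Gᵀ ∧
      Q₂ * (H * sympOmega n K * Hᵀ) * Q₂ᵀ = H * sympOmega n K * Hᵀ ∧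
      Q = M⁻¹ *
          (Matrix.fromBlocks Q₁ 0 0 Q₂).submatrix
            ⇑(finSumFinEquiv.trans
                (finCongr (by omega : 2 * k + (2 * n - 2 * k) = 2 * n))).symm
            ⇑(finSumFinEquiv.trans
                (finCongr (by omega : 2 * k + (2 * n - 2 * k) = 2 * n))).symm *
          M := by
  classical
  set e : Fin (2 * k) ⊕ Fin (2 * n - 2 * k) ≃ Fin (2 * n) :=
    finSumFinEquiv.trans (finCongr (by omega : 2 * k + (2 * n - 2 * k) = 2 * n)) with he
  set R : Matrix (Fin (2 * k) ⊕ Fin (2 * n - 2 * k)) (Fin (2 * n)) K :=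
    Matrix.fromRows G H with hRdef
  have hM' : M = R.submatrix ⇑e.symm id := by rw [hM]; rfl
  have hdet : IsUnit M.det := (Matrix.isUnit_iff_isUnit_det M).mp hMunit
  have hMiM : M⁻¹ * M = 1 := Matrix.nonsing_inv_mul M hdet
  have hMMi : M * M⁻¹ = 1 := Matrix.mul_nonsing_inv M hdet
  have hGC : ∀ i, G i ∈ C := fun i => by
    rw [← hGsp]; exact Submodule.subset_span ⟨i, rfl⟩
  have hHD : ∀ i, H i ∈ sympDual n C := fun i => by
    rw [← hHsp]; exact Submodule.subset_span ⟨i, rfl⟩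
  have hGH0 : G * sympOmega n K * Hᵀ = 0 := by
    ext i j
    rw [gram_entry]
    simp only [Matrix.zero_apply]
    exact (mem_sympDual.mp (hHD j)) (G i) (hGC i)
  have hHG0 : H * sympOmega n K * Gᵀ = 0 := by
    ext i j
    rw [gram_entry]
    simp only [Matrix.zero_apply]
    rw [sympInner_anti (G j) (H i), (mem_sympDual.mp (hHD i)) (G j) (hGC j), neg_zero]
  have hMOM : M * sympOmega n K * Mᵀ =
      (Matrix.fromBlocks (G * sympOmega n K * Gᵀ) 0 0
        (H * sympOmega n K * Hᵀ)).submatrix ⇑e.symm ⇑e.symm := by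
    rw [hM', Matrix.transpose_submatrix]
    have h1 : R.submatrix ⇑e.symm id * sympOmega n K =
        (R * sympOmega n K).submatrix ⇑e.symm id := by
      have h0 := Matrix.submatrix_mul R (sympOmega n K) ⇑e.symm id id Function.bijective_id
      rw [Matrix.submatrix_id_id] at h0
      exact h0.symm
    have h2 : (R * sympOmega n K).submatrix ⇑e.symm id * Rᵀ.submatrix id ⇑e.symm =
        (R * sympOmega n K * Rᵀ).submatrix ⇑e.symm ⇑e.symm := by
      have h0 := Matrix.submatrix_mul (R * sympOmega n K) Rᵀ ⇑e.symm id ⇑e.symm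
        Function.bijective_id
      exact h0.symm
    rw [h1, h2]
    congr 1
    rw [hRdef, Matrix.transpose_fromRows, Matrix.fromRows_mul,
      Matrix.fromRows_mul_fromCols, hGH0, hHG0]
  have hblock : ∀ (Q₁ : Matrix (Fin (2 * k)) (Fin (2 * k)) K)
      (Q₂ : Matrix (Fin (2 * n - 2 * k)) (Fin (2 * n - 2 * k)) K)
      (P : Matrix (Fin (2 * n)) (Fin (2 * n)) K),
      M * P = (Matrix.fromBlocks Q₁ 0 0 Q₂).submatrix ⇑e.symm ⇑e.symm * M ↔
        (G * P = Q₁ * G ∧ H * P = Q₂ * H) := by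
    intro Q₁ Q₂ P
    rw [hM']
    have h1 : R.submatrix ⇑e.symm id * P = (R * P).submatrix ⇑e.symm id := by
      have h0 := Matrix.submatrix_mul R P ⇑e.symm id id Function.bijective_id
      rw [Matrix.submatrix_id_id] at h0
      exact h0.symm
    have h2 : (Matrix.fromBlocks Q₁ 0 0 Q₂).submatrix ⇑e.symm ⇑e.symm *
        R.submatrix ⇑e.symm id = (Matrix.fromBlocks Q₁ 0 0 Q₂ * R).submatrix ⇑e.symm id :=
      Matrix.submatrix_mul_equiv _ R ⇑e.symm e.symm id
    rw [h1, h2]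
    constructor
    · intro h
      have h3 := congrArg (fun X : Matrix (Fin (2 * n)) (Fin (2 * n)) K =>
        X.submatrix ⇑e id) h
      simp only [Matrix.submatrix_submatrix, Equiv.symm_comp_self, Function.comp_id,
        Matrix.submatrix_id_id] at h3
      rw [hRdef, Matrix.fromRows_mul, Matrix.fromBlocks_mul_fromRows,
        Matrix.fromRows_ext_iff] at h3
      constructor
      · rw [h3.1]; simp
      · rw [h3.2]; simp
    · rintro ⟨hg, hh⟩
      congr 1
      rw [hRdef, Matrix.fromRows_mul, Matrix.fromBlocks_mul_fromRows, hg, hh]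
      simp
  constructor
  · rintro ⟨hQu, hQΩ, hmap⟩
    have hinj : Function.Injective Q.vecMul := Matrix.vecMul_injective_iff_isUnit.mpr hQu
    have hGQrow : ∀ i, ∃ c : Fin (2 * k) → K, c ᵥ* G = (G * Q) i := by
      intro i
      have h1 : (G * Q) i ∈ C := by
        rw [← hmap]
        refine ⟨G i, hGC i, ?_⟩
        rw [Matrix.vecMulLinear_apply]
        exact (myRow_mul G Q i).symm
      rw [← hGsp] at h1
      exact (mem_span_rows_iff G _).mp h1
    choose c1 hc1 using hGQrow
    set Q₁ : Matrix (Fin (2 * k)) (Fin (2 * k)) K := Matrix.of c1 with hQ₁def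
    have hQ1G : Q₁ * G = G * Q := funext fun i => (myRow_mul Q₁ G i).trans (hc1 i)
    have hQ1u : IsUnit Q₁ := by
      rw [← Matrix.linearIndependent_rows_iff_isUnit, Fintype.linearIndependent_iff]
      intro g hg
      have h1 : g ᵥ* Q₁ = 0 := by rw [myVecMul_eq_sum]; exact hg
      have h2 : (g ᵥ* G) ᵥ* Q = 0 := by
        have h0 : g ᵥ* (Q₁ * G) = 0 := by
          rw [← Matrix.vecMul_vecMul, h1, Matrix.zero_vecMul]
        rw [hQ1G, ← Matrix.vecMul_vecMul] at h0
        exact h0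
      have h3 : g ᵥ* G = 0 := by
        apply hinj
        show (g ᵥ* G) ᵥ* Q = (0 : Fin (2 * n) → K) ᵥ* Q
        rw [h2, Matrix.zero_vecMul]
      exact Fintype.linearIndependent_iff.mp hGli g (by rw [← myVecMul_eq_sum]; exact h3)
    have hHQrow : ∀ i, ∃ c : Fin (2 * n - 2 * k) → K, c ᵥ* H = (H * Q) i := by
      intro i
      have hy : (H i) ᵥ* Q ∈ sympDual n C := by
        rw [mem_sympDual]
        intro x hx
        rw [← hmap] at hx
        obtain ⟨x', hx', hxq⟩ := hx
        rw [Matrix.vecMulLinear_apply] at hxq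
        rw [← hxq, sympInner_vecMul, hQΩ, ← sympInner_eq]
        exact (mem_sympDual.mp (hHD i)) x' hx'
      have hy' : (H * Q) i ∈ sympDual n C := by rw [myRow_mul]; exact hy
      rw [← hHsp] at hy'
      exact (mem_span_rows_iff H _).mp hy'
    choose c2 hc2 using hHQrow
    set Q₂ : Matrix (Fin (2 * n - 2 * k)) (Fin (2 * n - 2 * k)) K := Matrix.of c2 with hQ₂def
    have hQ2H : Q₂ * H = H * Q := funext fun i => (myRow_mul Q₂ H i).trans (hc2 i)
    have hQ2u : IsUnit Q₂ := by
      rw [← Matrix.linearIndependent_rows_iff_isUnit, Fintype.linearIndependent_iff]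
      intro g hg
      have h1 : g ᵥ* Q₂ = 0 := by rw [myVecMul_eq_sum]; exact hg
      have h2 : (g ᵥ* H) ᵥ* Q = 0 := by
        have h0 : g ᵥ* (Q₂ * H) = 0 := by
          rw [← Matrix.vecMul_vecMul, h1, Matrix.zero_vecMul]
        rw [hQ2H, ← Matrix.vecMul_vecMul] at h0
        exact h0
      have h3 : g ᵥ* H = 0 := by
        apply hinj
        show (g ᵥ* H) ᵥ* Q = (0 : Fin (2 * n) → K) ᵥ* Q
        rw [h2, Matrix.zero_vecMul]
      exact Fintype.linearIndependent_iff.mp hHli g (by rw [← myVecMul_eq_sum]; exact h3)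
    have hg1 : Q₁ * (G * sympOmega n K * Gᵀ) * Q₁ᵀ = G * sympOmega n K * Gᵀ := by
      have h0 := conj_omega_eq G Q hQΩ
      rw [← hQ1G] at h0
      calc Q₁ * (G * sympOmega n K * Gᵀ) * Q₁ᵀ
          = (Q₁ * G) * sympOmega n K * (Q₁ * G)ᵀ := by
            rw [Matrix.transpose_mul]; simp only [Matrix.mul_assoc]
        _ = G * sympOmega n K * Gᵀ := h0
    have hg2 : Q₂ * (H * sympOmega n K * Hᵀ) * Q₂ᵀ = H * sympOmega n K * Hᵀ := by
      have h0 := conj_omega_eq H Q hQΩ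
      rw [← hQ2H] at h0
      calc Q₂ * (H * sympOmega n K * Hᵀ) * Q₂ᵀ
          = (Q₂ * H) * sympOmega n K * (Q₂ * H)ᵀ := by
            rw [Matrix.transpose_mul]; simp only [Matrix.mul_assoc]
        _ = H * sympOmega n K * Hᵀ := h0
    refine ⟨Q₁, Q₂, hQ1u, hQ2u, hg1, hg2, ?_⟩
    have hMQ : M * Q = (Matrix.fromBlocks Q₁ 0 0 Q₂).submatrix ⇑e.symm ⇑e.symm * M :=
      (hblock Q₁ Q₂ Q).mpr ⟨hQ1G.symm, hQ2H.symm⟩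
    show Q = M⁻¹ * (Matrix.fromBlocks Q₁ 0 0 Q₂).submatrix ⇑e.symm ⇑e.symm * M
    calc Q = (M⁻¹ * M) * Q := by rw [hMiM, Matrix.one_mul]
      _ = M⁻¹ * (M * Q) := by rw [Matrix.mul_assoc]
      _ = M⁻¹ * ((Matrix.fromBlocks Q₁ 0 0 Q₂).submatrix ⇑e.symm ⇑e.symm * M) := by
          rw [hMQ]
      _ = M⁻¹ * (Matrix.fromBlocks Q₁ 0 0 Q₂).submatrix ⇑e.symm ⇑e.symm * M := by
          rw [Matrix.mul_assoc]
  · rintro ⟨Q₁, Q₂, hQ1u, hQ2u, hg1, hg2, hQeq⟩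
    have hQeq' : Q = M⁻¹ * (Matrix.fromBlocks Q₁ 0 0 Q₂).submatrix ⇑e.symm ⇑e.symm * M :=
      hQeq
    set D : Matrix (Fin (2 * n)) (Fin (2 * n)) K :=
      (Matrix.fromBlocks Q₁ 0 0 Q₂).submatrix ⇑e.symm ⇑e.symm with hDdef
    have hMQ : M * Q = D * M := by
      rw [hQeq']
      calc M * (M⁻¹ * D * M) = (M * M⁻¹) * (D * M) := by simp only [Matrix.mul_assoc]
        _ = D * M := by rw [hMMi, Matrix.one_mul]
    obtain ⟨hg, hh⟩ := (hblock Q₁ Q₂ Q).mp hMQ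
    have hDu : IsUnit D := by
      rw [Matrix.isUnit_iff_isUnit_det, hDdef, Matrix.det_submatrix_equiv_self,
        Matrix.det_fromBlocks_zero₂₁]
      exact ((Matrix.isUnit_iff_isUnit_det Q₁).mp hQ1u).mul
        ((Matrix.isUnit_iff_isUnit_det Q₂).mp hQ2u)
    have hQu : IsUnit Q := by
      rw [Matrix.isUnit_iff_isUnit_det]
      have h1 : M.det * Q.det = D.det * M.det := by
        rw [← Matrix.det_mul, ← Matrix.det_mul, hMQ]
      have h2 : Q.det = D.det := by
        apply mul_left_cancel₀ hdet.ne_zero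
        rw [h1, mul_comm]
      rw [h2]
      exact (Matrix.isUnit_iff_isUnit_det D).mp hDu
    have hDND : D * (M * sympOmega n K * Mᵀ) * Dᵀ = M * sympOmega n K * Mᵀ := by
      rw [hMOM, hDdef, Matrix.transpose_submatrix, Matrix.submatrix_mul_equiv _ _ ⇑e.symm
        e.symm ⇑e.symm, Matrix.submatrix_mul_equiv _ _ ⇑e.symm e.symm ⇑e.symm]
      congr 1
      rw [Matrix.fromBlocks_transpose, Matrix.fromBlocks_multiply, Matrix.fromBlocks_multiply]
      simp [hg1, hg2]
    have hQΩ : Q * sympOmega n K * Qᵀ = sympOmega n K := by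
      have h1 : M * (Q * sympOmega n K * Qᵀ) * Mᵀ = M * sympOmega n K * Mᵀ := by
        calc M * (Q * sympOmega n K * Qᵀ) * Mᵀ = (M * Q) * sympOmega n K * (M * Q)ᵀ := by
              rw [Matrix.transpose_mul]; simp only [Matrix.mul_assoc]
          _ = (D * M) * sympOmega n K * (D * M)ᵀ := by rw [hMQ]
          _ = D * (M * sympOmega n K * Mᵀ) * Dᵀ := by
              rw [Matrix.transpose_mul]; simp only [Matrix.mul_assoc]
          _ = M * sympOmega n K * Mᵀ := hDND
      have h2 : ∀ X : Matrix (Fin (2 * n)) (Fin (2 * n)) K,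
          M⁻¹ * (M * X * Mᵀ) * Mᵀ⁻¹ = X := by
        intro X
        calc M⁻¹ * (M * X * Mᵀ) * Mᵀ⁻¹ = (M⁻¹ * M) * (X * (Mᵀ * Mᵀ⁻¹)) := by
              simp only [Matrix.mul_assoc]
          _ = X := by
              rw [hMiM, Matrix.mul_nonsing_inv Mᵀ (by rwa [Matrix.det_transpose]),
                Matrix.one_mul, Matrix.mul_one]
      have h3 := congrArg (fun X => M⁻¹ * X * Mᵀ⁻¹) h1
      rw [h2, h2] at h3
      exact h3
    have hmap : C.map (Matrix.vecMulLinear Q) = C := by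
      have h1 : C.map (Matrix.vecMulLinear Q) =
          Submodule.span K (Set.range fun i : Fin (2 * k) => (G * Q) i) := by
        rw [← hGsp, Submodule.map_span]
        congr 1
        rw [← Set.range_comp]
        exact congrArg Set.range (funext fun i => (myRow_mul G Q i).symm)
      rw [h1, show G * Q = Q₁ * G from hg, span_rows_unit_mul Q₁ hQ1u G, hGsp]
    exact ⟨hQu, hQΩ, hmap⟩
end
end

section
/- Let q be a prime power and let n, k be integers with 1 ≤ k ≤ n. The number of distinct symplectic self-orthogonal [2n,k]_q codes equals ∏_{i=1}^{k} (q^{2n−2i+2} − 1)/(q^i − 1), i.e., (q^{2n−2k+2} − 1)(q^{2n−2k+4} − 1) ⋯ (q^{2n} − 1) / ( (q^k − 1)(q^{k−1} − 1) ⋯ (q − 1) ). -/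
open scoped BigOperators
open Matrix

noncomputable section

namespace SympAux

variable {K : Type*} [Field K] {n : ℕ}

/-- The symplectic form as a bilinear form. -/
def sympB (K : Type*) [Field K] (n : ℕ) :
    LinearMap.BilinForm K (Fin (2 * n) → K) :=
  LinearMap.mk₂ K (sympInner n)
    (fun x x' y => by
      simp only [sympInner, Pi.add_apply, ← Finset.sum_add_distrib]
      exact Finset.sum_congr rfl fun i _ => by ring)
    (fun c x y => by
      simp only [sympInner, Pi.smul_apply, smul_eq_mul, Finset.mul_sum]
      exact Finset.sum_congr rfl fun i _ => by ring)
    (fun x y y' => by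
      simp only [sympInner, Pi.add_apply, ← Finset.sum_add_distrib]
      exact Finset.sum_congr rfl fun i _ => by ring)
    (fun c x y => by
      simp only [sympInner, Pi.smul_apply, smul_eq_mul, Finset.mul_sum]
      exact Finset.sum_congr rfl fun i _ => by ring)

@[simp] theorem sympB_apply (x y : Fin (2 * n) → K) :
    sympB K n x y = sympInner n x y := rfl

theorem sympInner_self (x : Fin (2 * n) → K) : sympInner n x x = 0 := by
  exact Finset.sum_eq_zero fun i _ => by ring

theorem sympInner_anti (x y : Fin (2 * n) → K) :
    sympInner n y x = - sympInner n x y := by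
  simp only [sympInner, ← Finset.sum_neg_distrib]
  exact Finset.sum_congr rfl fun i _ => by ring

theorem sympB_isRefl : (sympB K n).IsRefl := by
  intro x y h
  simp only [sympB_apply] at h ⊢
  rw [sympInner_anti, h, neg_zero]

theorem sympB_nondeg : (sympB K n).Nondegenerate := by
  refine (LinearMap.IsRefl.nondegenerate_iff_separatingLeft (sympB_isRefl : LinearMap.IsRefl (sympB K n))).mpr ?_
  intro m h
  funext j
  simp only [sympB_apply, sympInner] at h
  by_cases hj : j.1 < n
  · have hm := h (fun b => if b.1 = n + j.1 then 1 else 0)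
    rw [Finset.sum_eq_single (⟨j.1, hj⟩ : Fin n)] at hm
    · have h1 : ¬ ((j.1 : ℕ) = n + j.1) := by omega
      have h1' : n ≠ 0 := by omega
      simpa [h1, h1'] using hm
    · intro b _ hb
      have hbv : b.1 ≠ j.1 := Fin.val_ne_of_ne hb
      have hb1 : ¬ (n + b.1 = n + j.1) := by omega
      have hb2 : ¬ ((b.1 : ℕ) = n + j.1) := by have := b.2; omega
      simp [hb1, hb2, hbv]
    · simp
  · have hj2 := j.2
    have hjn : j.1 - n < n := by omega
    have hm := h (fun b => if b.1 = j.1 - n then 1 else 0)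
    rw [Finset.sum_eq_single (⟨j.1 - n, hjn⟩ : Fin n)] at hm
    · have h1 : ¬ (n + (j.1 - n) = j.1 - n) := by omega
      have h2 : (⟨n + (j.1 - n), by omega⟩ : Fin (2 * n)) = j := Fin.ext (by simp; omega)
      rw [if_neg h1, if_pos rfl] at hm
      simp only [mul_zero, mul_one, zero_sub, neg_eq_zero] at hm
      rwa [h2] at hm
    · intro b _ hb
      have hbv : b.1 ≠ j.1 - n := Fin.val_ne_of_ne hb
      have hb1 : ¬ (n + b.1 = j.1 - n) := by have := b.2; omega
      have hb2 : ¬ ((b.1 : ℕ) = j.1 - n) := hbv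
      simp [hb1, hb2]
    · simp

theorem mem_sympDual {C : Submodule K (Fin (2 * n) → K)} {y : Fin (2 * n) → K} :
    y ∈ sympDual n C ↔ ∀ x ∈ C, sympInner n x y = 0 := Iff.rfl

theorem sympDual_eq (C : Submodule K (Fin (2 * n) → K)) :
    sympDual n C = (sympB K n).orthogonal C := by
  ext y
  rw [mem_sympDual, LinearMap.BilinForm.mem_orthogonal_iff]
  rfl

theorem mem_orth_of_forall {m : ℕ} (f : Fin m → (Fin (2 * n) → K)) (v : Fin (2 * n) → K)
    (h : ∀ i, sympInner n (f i) v = 0) :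
    v ∈ (sympB K n).orthogonal (Submodule.span K (Set.range f)) := by
  rw [LinearMap.BilinForm.mem_orthogonal_iff]
  intro x hx
  induction hx using Submodule.span_induction with
  | mem x hx => obtain ⟨i, rfl⟩ := hx; exact h i
  | zero => simp [LinearMap.BilinForm.IsOrtho]
  | add x y _ _ hx hy =>
      simp only [LinearMap.BilinForm.IsOrtho, map_add, LinearMap.add_apply] at hx hy ⊢
      rw [hx, hy, add_zero]
  | smul a x _ hx =>
      simp only [LinearMap.BilinForm.IsOrtho, _root_.map_smul, LinearMap.smul_apply,
        smul_eq_mul] at hx ⊢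
      rw [hx, mul_zero]

theorem span_le_sympDual {m : ℕ} (f : Fin m → (Fin (2 * n) → K))
    (h : ∀ i j, sympInner n (f i) (f j) = 0) :
    Submodule.span K (Set.range f) ≤ sympDual n (Submodule.span K (Set.range f)) := by
  rw [sympDual_eq]
  apply Submodule.span_le.mpr
  rintro y ⟨i, rfl⟩
  exact mem_orth_of_forall f (f i) (fun j => h j i)

/-- Isotropic independent tuples. -/
def IsoT (K : Type*) [Field K] (n k : ℕ) : Type _ :=
  {f : Fin k → (Fin (2 * n) → K) // LinearIndependent K f ∧
    ∀ i j, sympInner n (f i) (f j) = 0}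

instance [Fintype K] (k : ℕ) : Finite (IsoT K n k) :=
  Subtype.finite

instance : Unique (IsoT K n 0) where
  default := ⟨fun i => i.elim0, linearIndependent_empty_type, fun i => i.elim0⟩
  uniq f := Subtype.ext (funext fun i => i.elim0)

/-- Initial segment of an isotropic tuple. -/
def isoInit {k : ℕ} (g : IsoT K n (k + 1)) : IsoT K n k :=
  ⟨Fin.init g.1, by
      have := g.2.1
      rw [← Fin.snoc_init_self g.1] at this
      exact (linearIndependent_fin_snoc.mp this).1,
    fun i j => g.2.2 i.castSucc j.castSucc⟩

/-- The fiber of `isoInit` over `f` is the set of admissible extension vectors. -/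
def fiberEquiv {k : ℕ} (f : IsoT K n k) :
    {g : IsoT K n (k + 1) // isoInit g = f} ≃
      {v : Fin (2 * n) → K //
        v ∈ (sympB K n).orthogonal (Submodule.span K (Set.range f.1)) ∧
        v ∉ Submodule.span K (Set.range f.1)} where
  toFun g := ⟨g.1.1 (Fin.last k), by
    have hinit : Fin.init g.1.1 = f.1 := congrArg Subtype.val g.2
    have hsnoc := g.1.2.1
    rw [← Fin.snoc_init_self g.1.1] at hsnoc
    constructor
    · rw [← hinit]
      exact mem_orth_of_forall _ _ (fun i => g.1.2.2 i.castSucc (Fin.last k))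
    · rw [← hinit]
      exact (linearIndependent_fin_snoc.mp hsnoc).2⟩
  invFun v := ⟨⟨Fin.snoc f.1 v.1,
      linearIndependent_fin_snoc.mpr ⟨f.2.1, v.2.2⟩, by
      intro i j
      induction i using Fin.lastCases with
      | last =>
        induction j using Fin.lastCases with
        | last => rw [Fin.snoc_last]; exact sympInner_self _
        | cast j =>
          rw [Fin.snoc_last, Fin.snoc_castSucc, sympInner_anti]
          have := LinearMap.BilinForm.mem_orthogonal_iff.mp v.2.1 (f.1 j)
            (Submodule.subset_span (Set.mem_range_self j))
          simpa using this
      | cast i =>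
        induction j using Fin.lastCases with
        | last =>
          rw [Fin.snoc_castSucc, Fin.snoc_last]
          exact LinearMap.BilinForm.mem_orthogonal_iff.mp v.2.1 (f.1 i)
            (Submodule.subset_span (Set.mem_range_self i))
        | cast j =>
          rw [Fin.snoc_castSucc, Fin.snoc_castSucc]
          exact f.2.2 i j⟩,
    Subtype.ext (by simp [isoInit])⟩
  left_inv g := Subtype.ext (Subtype.ext (by
    have hinit : Fin.init g.1.1 = f.1 := congrArg Subtype.val g.2
    have hs := Fin.snoc_init_self g.1.1
    rw [hinit] at hs
    exact hs))
  right_inv v := Subtype.ext (by simp)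

section Counting

variable [Fintype K]

theorem card_ext_set {k : ℕ} (f : IsoT K n k) :
    Nat.card {v : Fin (2 * n) → K //
        v ∈ (sympB K n).orthogonal (Submodule.span K (Set.range f.1)) ∧
        v ∉ Submodule.span K (Set.range f.1)} =
      Fintype.card K ^ (2 * n - k) - Fintype.card K ^ k := by
  set S := Submodule.span K (Set.range f.1) with hS
  set O := (sympB K n).orthogonal S with hO
  have hfr : Module.finrank K S = k := by
    rw [hS, finrank_span_eq_card f.2.1]; simp
  have hle : S ≤ O := by
    have := span_le_sympDual f.1 f.2.2
    rwa [sympDual_eq] at this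
  have hfrO : Module.finrank K O = 2 * n - k := by
    rw [hO, LinearMap.BilinForm.finrank_orthogonal sympB_nondeg, hfr,
      Module.finrank_fin_fun]
  letI : Fintype S := Fintype.ofFinite _
  letI : Fintype O := Fintype.ofFinite _
  have hcS : Nat.card S = Fintype.card K ^ k := by
    rw [Nat.card_eq_fintype_card, Module.card_eq_pow_finrank (K := K), hfr]
  have hcO : Nat.card O = Fintype.card K ^ (2 * n - k) := by
    rw [Nat.card_eq_fintype_card, Module.card_eq_pow_finrank (K := K), hfrO]
  have e : {v : Fin (2 * n) → K // v ∈ O ∧ v ∉ S} ≃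
      ((O : Set (Fin (2 * n) → K)) \ (S : Set (Fin (2 * n) → K)) : Set (Fin (2 * n) → K)) :=
    Equiv.subtypeEquivRight (fun v => by simp [Set.mem_diff])
  have hsub : (S : Set (Fin (2 * n) → K)) ⊆ (O : Set (Fin (2 * n) → K)) := hle
  rw [Nat.card_congr e, Nat.card_coe_set_eq, Set.ncard_diff hsub,
    ← Nat.card_coe_set_eq, ← Nat.card_coe_set_eq]
  simp only [SetLike.coe_sort_coe]
  rw [hcO, hcS]

theorem card_isoT (k : ℕ) (hkn : k ≤ n) :
    Nat.card (IsoT K n k) =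
      ∏ i ∈ Finset.range k, (Fintype.card K ^ (2 * n - i) - Fintype.card K ^ i) := by
  induction k with
  | zero => simp [Nat.card_unique]
  | succ k ih =>
    have hk : k ≤ n := by omega
    letI : Fintype (IsoT K n k) := Fintype.ofFinite _
    letI : ∀ f : IsoT K n k, Fintype {g : IsoT K n (k + 1) // isoInit g = f} :=
      fun f => Fintype.ofFinite _
    have h1 : Nat.card (IsoT K n (k + 1)) =
        ∑ f : IsoT K n k, Nat.card {g : IsoT K n (k + 1) // isoInit g = f} := by
      rw [Nat.card_congr (Equiv.sigmaFiberEquiv (isoInit (K := K) (n := n) (k := k))).symm,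
        Nat.card_eq_fintype_card, Fintype.card_sigma]
      exact Finset.sum_congr rfl fun f _ => Nat.card_eq_fintype_card.symm
    have h2 : ∀ f : IsoT K n k, Nat.card {g : IsoT K n (k + 1) // isoInit g = f} =
        Fintype.card K ^ (2 * n - k) - Fintype.card K ^ k :=
      fun f => by rw [Nat.card_congr (fiberEquiv f)]; exact card_ext_set f
    have hc : Fintype.card (IsoT K n k) =
        ∏ i ∈ Finset.range k, (Fintype.card K ^ (2 * n - i) - Fintype.card K ^ i) := by
      rw [← Nat.card_eq_fintype_card]; exact ih hk
    rw [h1, Finset.sum_congr rfl fun f _ => h2 f, Finset.sum_const, smul_eq_mul,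
      Finset.prod_range_succ, Finset.card_univ, hc, mul_comm]

instance : Finite (Submodule K (Fin (2 * n) → K)) :=
  Finite.of_injective (fun C => (C : Set (Fin (2 * n) → K))) SetLike.coe_injective

/-- Fibers of the span map over a fixed code. -/
def codeFiberEquiv (k : ℕ) (C : Submodule K (Fin (2 * n) → K)) (hC1 : Module.finrank K C = k)
    (hC2 : C ≤ sympDual n C) :
    {f : IsoT K n k // Submodule.span K (Set.range f.1) = C} ≃
      {g : Fin k → C // LinearIndependent K g} where
  toFun f := ⟨fun i => ⟨f.1.1 i, by
      have := Submodule.subset_span (R := K) (Set.mem_range_self (f := f.1.1) i)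
      rwa [f.2] at this⟩,
    LinearIndependent.of_comp C.subtype (by exact f.1.2.1)⟩
  invFun g := ⟨⟨fun i => (g.1 i : Fin (2 * n) → K),
      g.2.map' C.subtype (Submodule.ker_subtype C),
      fun i j => mem_sympDual.mp (hC2 (g.1 j).2) _ (g.1 i).2⟩,
    by
      apply Submodule.eq_of_le_of_finrank_eq
      · rw [Submodule.span_le]; rintro x ⟨i, rfl⟩; exact (g.1 i).2
      · have hli : LinearIndependent K (fun i => ((g.1 i : Fin (2 * n) → K))) :=
          g.2.map' C.subtype (Submodule.ker_subtype C)
        exact (finrank_span_eq_card hli).trans (by simp [hC1])⟩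
  left_inv f := Subtype.ext (Subtype.ext rfl)
  right_inv g := Subtype.ext (funext fun i => Subtype.ext rfl)

theorem card_codes_mul (k : ℕ) :
    Nat.card {C : Submodule K (Fin (2 * n) → K) //
        Module.finrank K C = k ∧ C ≤ sympDual n C} *
      ∏ i ∈ Finset.range k, (Fintype.card K ^ k - Fintype.card K ^ i) =
      Nat.card (IsoT K n k) := by
  set Codes := {C : Submodule K (Fin (2 * n) → K) //
      Module.finrank K C = k ∧ C ≤ sympDual n C} with hCodes
  let π : IsoT K n k → Codes := fun f =>
    ⟨Submodule.span K (Set.range f.1),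
      by rw [finrank_span_eq_card f.2.1]; simp,
      span_le_sympDual f.1 f.2.2⟩
  letI : Fintype Codes := Fintype.ofFinite _
  letI : ∀ C : Codes, Fintype {f : IsoT K n k // π f = C} := fun C => Fintype.ofFinite _
  have h1 : Nat.card (IsoT K n k) = ∑ C : Codes, Nat.card {f : IsoT K n k // π f = C} := by
    rw [Nat.card_congr (Equiv.sigmaFiberEquiv π).symm,
      Nat.card_eq_fintype_card, Fintype.card_sigma]
    exact Finset.sum_congr rfl fun C _ => Nat.card_eq_fintype_card.symm
  have h2 : ∀ C : Codes, Nat.card {f : IsoT K n k // π f = C} =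
      ∏ i ∈ Finset.range k, (Fintype.card K ^ k - Fintype.card K ^ i) := by
    intro C
    have e1 : {f : IsoT K n k // π f = C} ≃
        {f : IsoT K n k // Submodule.span K (Set.range f.1) = C.1} :=
      Equiv.subtypeEquivRight (fun f => by
        constructor
        · intro h; exact congrArg Subtype.val h
        · intro h; exact Subtype.ext h)
    rw [Nat.card_congr e1, Nat.card_congr (codeFiberEquiv k C.1 C.2.1 C.2.2),
      card_linearIndependent (by rw [C.2.1])]
    rw [C.2.1, ← Fin.prod_univ_eq_prod_range]
  rw [h1, Finset.sum_congr rfl fun C _ => h2 C, Finset.sum_const, smul_eq_mul,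
    Finset.card_univ, Nat.card_eq_fintype_card]

end Counting

theorem prod_Icc_one {M : Type*} [CommMonoid M] (f : ℕ → M) (k : ℕ) :
    ∏ i ∈ Finset.Icc 1 k, f i = ∏ j ∈ Finset.range k, f (j + 1) := by
  induction k with
  | zero => simp
  | succ k ih => rw [Finset.prod_Icc_succ_top (by omega), ih, Finset.prod_range_succ]

end SympAux


/-- The number of symplectic self-orthogonal `[2n,k]_q` codes equals
`∏_{i=1}^{k} (q^{2n-2i+2} - 1)/(q^i - 1)`. -/
theorem card_symplectic_selfOrthogonal
    (q : ℕ) (hq : IsPrimePow q)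
    {K : Type*} [Field K] [Fintype K] (hK : Fintype.card K = q)
    (n k : ℕ) (hk : 1 ≤ k) (hkn : k ≤ n) :
    (Nat.card {C : Submodule K (Fin (2 * n) → K) //
        Module.finrank K C = k ∧ C ≤ sympDual n C} : ℚ) =
      ∏ i ∈ Finset.Icc 1 k, ((q : ℚ) ^ (2 * n - 2 * i + 2) - 1) / ((q : ℚ) ^ i - 1) := by
  classical
  have hq2 : 2 ≤ q := hq.two_le
  have hqQ : (2 : ℚ) ≤ (q : ℚ) := by exact_mod_cast hq2
  have hq1 : (1 : ℚ) < (q : ℚ) := by linarith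
  have hq0 : (q : ℚ) ≠ 0 := by linarith
  have hnat := SympAux.card_codes_mul (K := K) (n := n) k
  rw [SympAux.card_isoT (K := K) (n := n) k hkn, hK] at hnat
  set c : ℚ := (Nat.card {C : Submodule K (Fin (2 * n) → K) //
      Module.finrank K C = k ∧ C ≤ sympDual n C} : ℚ) with hc
  -- cast the natural-number identity to ℚ
  have hcast : c * ∏ i ∈ Finset.range k, ((q : ℚ) ^ k - (q : ℚ) ^ i)
      = ∏ i ∈ Finset.range k, ((q : ℚ) ^ (2 * n - i) - (q : ℚ) ^ i) := by
    have h := congrArg (Nat.cast : ℕ → ℚ) hnat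
    rw [Nat.cast_mul, Nat.cast_prod, Nat.cast_prod] at h
    rw [hc, Finset.prod_congr rfl (fun i hi => ?_), h,
      Finset.prod_congr rfl (fun i hi => ?_)]
    · have hle : q ^ i ≤ q ^ (2 * n - i) :=
        Nat.pow_le_pow_right (by omega)
          (by have := Finset.mem_range.mp hi; omega)
      rw [Nat.cast_sub hle]; push_cast; ring
    · have hle : q ^ i ≤ q ^ k :=
        Nat.pow_le_pow_right (by omega) (le_of_lt (Finset.mem_range.mp hi))
      rw [Nat.cast_sub hle]; push_cast; ring
  set P : ℚ := ∏ i ∈ Finset.range k, (q : ℚ) ^ i with hP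
  set N : ℚ := ∏ i ∈ Finset.range k, ((q : ℚ) ^ (2 * n - 2 * i) - 1) with hN
  set D : ℚ := ∏ i ∈ Finset.range k, ((q : ℚ) ^ (k - i) - 1) with hD
  have hsplitB : ∏ i ∈ Finset.range k, ((q : ℚ) ^ (2 * n - i) - (q : ℚ) ^ i) = P * N := by
    rw [hP, hN, ← Finset.prod_mul_distrib]
    refine Finset.prod_congr rfl fun i hi => ?_
    have hi' : i < k := Finset.mem_range.mp hi
    rw [show 2 * n - i = i + (2 * n - 2 * i) from by omega, pow_add]; ring
  have hsplitA : ∏ i ∈ Finset.range k, ((q : ℚ) ^ k - (q : ℚ) ^ i) = P * D := by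
    rw [hP, hD, ← Finset.prod_mul_distrib]
    refine Finset.prod_congr rfl fun i hi => ?_
    have hi' : i < k := Finset.mem_range.mp hi
    rw [show k = i + (k - i) from by omega, pow_add]
    ring_nf
    rw [show i + (k - i) - i = k - i from by omega]
  have hP0 : P ≠ 0 :=
    Finset.prod_ne_zero_iff.mpr fun i _ => pow_ne_zero _ hq0
  have hD0 : D ≠ 0 := by
    refine Finset.prod_ne_zero_iff.mpr fun i hi => sub_ne_zero.mpr (ne_of_gt ?_)
    exact one_lt_pow₀ hq1 (by have := Finset.mem_range.mp hi; omega)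
  have hcD : c * D = N := by
    apply mul_left_cancel₀ hP0
    rw [hsplitA, hsplitB] at hcast
    calc P * (c * D) = c * (P * D) := by ring
      _ = P * N := hcast
  have hnum : ∏ i ∈ Finset.Icc 1 k, ((q : ℚ) ^ (2 * n - 2 * i + 2) - 1) = N := by
    rw [SympAux.prod_Icc_one, hN]
    refine Finset.prod_congr rfl fun j hj => ?_
    have hj' : j < k := Finset.mem_range.mp hj
    rw [show 2 * n - 2 * (j + 1) + 2 = 2 * n - 2 * j from by omega]
  have hden : ∏ i ∈ Finset.Icc 1 k, ((q : ℚ) ^ i - 1) = D := by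
    rw [SympAux.prod_Icc_one (fun i => (q : ℚ) ^ i - 1) k,
      ← Finset.prod_range_reflect (fun j => (q : ℚ) ^ (j + 1) - 1) k, hD]
    refine Finset.prod_congr rfl fun j hj => ?_
    have hj' : j < k := Finset.mem_range.mp hj
    rw [show k - 1 - j + 1 = k - j from by omega]
  rw [Finset.prod_div_distrib, hnum, hden, eq_div_iff hD0]
  exact hcD
end
end
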